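/- Let G be a connected locally finite graph, W₁-oriented with respect to finitely supported distributions f₀, f₁ (an edge x→y is oriented if some geodesic γ with endpoint pair in C(f₀,f₁) traverses it in that direction). Then every oriented path in (G,→) is a geodesic of G; i.e., if γ(0)→γ(1)→…→γ(n) then d(γ(0),γ(n)) = n. -/

import Mathlib

open scoped BigOperators Classical

noncomputable section

variable {V : Type*}

/-- π is a coupling of the finitely supported distributions f₀ and f₁. -/
def IsCoupling (f₀ f₁ : V →₀ ℝ) (π : V × V →₀ ℝ) : Prop :=
  (∀ p, 0 ≤ π p) ∧
    (∀ x, (π.sum fun p v => if p.1 = x then v else 0) = f₀ x) ∧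
    (∀ y, (π.sum fun p v => if p.2 = y then v else 0) = f₁ y)

/-- Transport cost of a coupling, for the graph distance of G. -/
def gcost (G : SimpleGraph V) (π : V × V →₀ ℝ) : ℝ :=
  π.sum fun p v => (G.dist p.1 p.2 : ℝ) * v

/-- π is a W₁-optimal coupling of f₀ and f₁ on the graph G. -/
def IsOptimalCoupling (G : SimpleGraph V) (f₀ f₁ : V →₀ ℝ) (π : V × V →₀ ℝ) : Prop :=
  IsCoupling f₀ f₁ π ∧ ∀ π', IsCoupling f₀ f₁ π' → gcost G π ≤ gcost G π'

/-- C(f₀,f₁): union of the supports of all W₁-optimal couplings. -/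
def commonSupport (G : SimpleGraph V) (f₀ f₁ : V →₀ ℝ) : Set (V × V) :=
  {p | ∃ π, IsOptimalCoupling G f₀ f₁ π ∧ 0 < π p}

/-- f is a (finitely supported) probability distribution. -/
def IsProb (f : V →₀ ℝ) : Prop := (∀ x, 0 ≤ f x) ∧ (f.sum fun _ v => v) = 1

/-- γ(0),…,γ(n) is a geodesic of G of length n. -/
def IsGeodesic (G : SimpleGraph V) (γ : ℕ → V) (n : ℕ) : Prop :=
  (∀ i < n, G.Adj (γ i) (γ (i + 1))) ∧ G.dist (γ 0) (γ n) = n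

/-- The W₁-orientation: x → y if some geodesic with endpoint pair in C(f₀,f₁)
traverses the edge (x,y) in that direction. -/
def OrientedEdge (G : SimpleGraph V) (f₀ f₁ : V →₀ ℝ) (x y : V) : Prop :=
  ∃ (γ : ℕ → V) (n k : ℕ), IsGeodesic G γ n ∧
    (γ 0, γ n) ∈ commonSupport G f₀ f₁ ∧ k + 1 ≤ n ∧ γ k = x ∧ γ (k + 1) = y

/-! ### Auxiliary machinery -/

/-- The linear functional `π ↦ ∑ w p * π p`. -/
def wsum (w : V × V → ℝ) : (V × V →₀ ℝ) →ₗ[ℝ] ℝ := Finsupp.linearCombination ℝ w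

lemma wsum_apply (w : V × V → ℝ) (π : V × V →₀ ℝ) :
    wsum w π = π.sum fun p v => w p * v := by
  simp [wsum, Finsupp.linearCombination_apply, Finsupp.sum, mul_comm]

lemma wsum_single (w : V × V → ℝ) (p : V × V) (c : ℝ) :
    wsum w (Finsupp.single p c) = w p * c := by
  simp [wsum, mul_comm]

lemma marg1_eq (π : V × V →₀ ℝ) (x : V) :
    (π.sum fun p v => if p.1 = x then v else 0)
      = wsum (fun p => if p.1 = x then 1 else 0) π := by
  rw [wsum_apply]
  apply Finsupp.sum_congr
  intro p _
  split <;> simp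

lemma marg2_eq (π : V × V →₀ ℝ) (y : V) :
    (π.sum fun p v => if p.2 = y then v else 0)
      = wsum (fun p => if p.2 = y then 1 else 0) π := by
  rw [wsum_apply]
  apply Finsupp.sum_congr
  intro p _
  split <;> simp

lemma gcost_eq (G : SimpleGraph V) (π : V × V →₀ ℝ) :
    gcost G π = wsum (fun p => (G.dist p.1 p.2 : ℝ)) π := by
  rw [gcost, wsum_apply]

/-- Distance bound along a chain of adjacent vertices. -/
lemma chain_dist (G : SimpleGraph V) (hconn : G.Connected) (γ : ℕ → V) :
    ∀ n : ℕ, (∀ i < n, G.Adj (γ i) (γ (i + 1))) → G.dist (γ 0) (γ n) ≤ n := by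
  intro n
  induction n with
  | zero => simp
  | succ n ih =>
    intro h
    have h1 := ih fun i hi => h i (by omega)
    have h2 : G.dist (γ n) (γ (n + 1)) ≤ 1 := by
      have := SimpleGraph.dist_le (h n (by omega)).toWalk
      simpa using this
    have h3 := hconn.dist_triangle (u := γ 0) (v := γ n) (w := γ (n + 1))
    omega

/-- Points along a geodesic realize the distance. -/
lemma geo_split (G : SimpleGraph V) (hconn : G.Connected) {σ : ℕ → V} {N : ℕ}
    (hgeo : IsGeodesic G σ N) {j : ℕ} (hj : j ≤ N) :
    G.dist (σ 0) (σ j) = j ∧ G.dist (σ j) (σ N) = N - j := by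
  have h1 : G.dist (σ 0) (σ j) ≤ j :=
    chain_dist G hconn σ j fun i hi => hgeo.1 i (by omega)
  have h2 : G.dist (σ j) (σ N) ≤ N - j := by
    have := chain_dist G hconn (fun t => σ (j + t)) (N - j) (fun i hi => by
      show G.Adj (σ (j + i)) (σ (j + (i + 1)))
      rw [← Nat.add_assoc]
      exact hgeo.1 (j + i) (by omega))
    simpa [Nat.add_sub_cancel' hj] using this
  have h3 := hconn.dist_triangle (u := σ 0) (v := σ j) (w := σ N)
  have h4 := hgeo.2
  omega

/-- The average of optimal couplings is an optimal coupling whose support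
contains all given supports. -/
lemma exists_common_optimal (G : SimpleGraph V) (f₀ f₁ : V →₀ ℝ)
    {m : ℕ} (hm : 0 < m) (π : Fin m → (V × V →₀ ℝ))
    (hopt : ∀ i, IsOptimalCoupling G f₀ f₁ (π i)) :
    ∃ Φ, IsOptimalCoupling G f₀ f₁ Φ ∧ ∀ i p, 0 < π i p → 0 < Φ p := by
  have hm' : (m : ℝ) ≠ 0 := Nat.cast_ne_zero.mpr hm.ne'
  refine ⟨(m : ℝ)⁻¹ • ∑ i, π i, ⟨⟨?_, ?_, ?_⟩, ?_⟩, ?_⟩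
  · intro r
    rw [Finsupp.smul_apply, smul_eq_mul]
    exact mul_nonneg (by positivity)
      (by
        rw [Finset.sum_apply']
        exact Finset.sum_nonneg fun i _ => (hopt i).1.1 r)
  · intro x
    rw [marg1_eq, map_smul, map_sum, smul_eq_mul]
    have : ∀ i : Fin m, wsum (fun p => if p.1 = x then (1:ℝ) else 0) (π i) = f₀ x :=
      fun i => by rw [← marg1_eq]; exact (hopt i).1.2.1 x
    rw [Finset.sum_congr rfl fun i _ => this i]
    simp [hm']
  · intro y
    rw [marg2_eq, map_smul, map_sum, smul_eq_mul]
    have : ∀ i : Fin m, wsum (fun p => if p.2 = y then (1:ℝ) else 0) (π i) = f₁ y :=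
      fun i => by rw [← marg2_eq]; exact (hopt i).1.2.2 y
    rw [Finset.sum_congr rfl fun i _ => this i]
    simp [hm']
  · intro π' hπ'
    rw [gcost_eq, map_smul, map_sum, smul_eq_mul]
    have hle : ∀ i : Fin m, wsum (fun p => (G.dist p.1 p.2 : ℝ)) (π i) ≤ gcost G π' :=
      fun i => by rw [← gcost_eq]; exact (hopt i).2 π' hπ'
    calc (m : ℝ)⁻¹ * ∑ i, wsum (fun p => (G.dist p.1 p.2 : ℝ)) (π i)
        ≤ (m : ℝ)⁻¹ * ∑ _i : Fin m, gcost G π' := by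
          apply mul_le_mul_of_nonneg_left (Finset.sum_le_sum fun i _ => hle i)
          positivity
      _ = gcost G π' := by
          rw [Finset.sum_const, Finset.card_univ, Fintype.card_fin]
          field_simp
          rw [nsmul_eq_mul]
  · intro i p hp
    rw [Finsupp.smul_apply, smul_eq_mul]
    apply mul_pos (by positivity)
    rw [Finset.sum_apply']
    exact Finset.sum_pos' (fun j _ => (hopt j).1.1 p) ⟨i, Finset.mem_univ i, hp⟩

/-- Cyclic monotonicity of the support of an optimal coupling. -/
lemma cyclic_ineq (G : SimpleGraph V) (f₀ f₁ : V →₀ ℝ) (Φ : V × V →₀ ℝ)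
    (hopt : IsOptimalCoupling G f₀ f₁ Φ) {m : ℕ} [NeZero m]
    (p : Fin m → V × V) (hp : ∀ i, 0 < Φ (p i)) :
    ∑ i : Fin m, (G.dist (p i).1 (p i).2 : ℝ) ≤
      ∑ i : Fin m, (G.dist (p (i + 1)).1 (p i).2 : ℝ) := by
  have hm : 0 < m := Nat.pos_of_ne_zero (NeZero.ne m)
  have hm' : (m : ℝ) ≠ 0 := Nat.cast_ne_zero.mpr hm.ne'
  set q : Fin m → V × V := fun i => ((p (i + 1)).1, (p i).2) with hq
  set δ : ℝ := Finset.univ.inf' Finset.univ_nonempty (fun i => Φ (p i)) with hδdef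
  have hδ : 0 < δ := (Finset.lt_inf'_iff _).mpr fun i _ => hp i
  set ε : ℝ := δ / m with hεdef
  have hε : 0 < ε := div_pos hδ (by positivity)
  set Φ' : V × V →₀ ℝ :=
    Φ + (∑ i, Finsupp.single (q i) ε) - (∑ i, Finsupp.single (p i) ε) with hΦ'
  have happly : ∀ r, Φ' r = Φ r + (∑ i, if q i = r then ε else 0)
      - (∑ i, if p i = r then ε else 0) := by
    intro r
    rw [hΦ', Finsupp.sub_apply, Finsupp.add_apply, Finset.sum_apply', Finset.sum_apply']
    simp [Finsupp.single_apply]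
  have hcoup : IsCoupling f₀ f₁ Φ' := by
    refine ⟨?_, ?_, ?_⟩
    · intro r
      rw [happly]
      have h1 : (∑ i, if p i = r then ε else 0) ≤ Φ r := by
        by_cases hr : ∃ i, p i = r
        · obtain ⟨i₀, hi₀⟩ := hr
          calc (∑ i, if p i = r then ε else 0) ≤ ∑ _i : Fin m, ε :=
                Finset.sum_le_sum fun i _ => by split <;> simp [hε.le]
            _ = m * ε := by
                rw [Finset.sum_const, Finset.card_univ, Fintype.card_fin, nsmul_eq_mul]
            _ = δ := by rw [hεdef]; field_simp
            _ ≤ Φ (p i₀) := Finset.inf'_le _ (Finset.mem_univ i₀)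
            _ = Φ r := by rw [hi₀]
        · have : (∑ i, if p i = r then ε else 0) = 0 :=
            Finset.sum_eq_zero fun i _ => if_neg fun h => hr ⟨i, h⟩
          rw [this]; exact hopt.1.1 r
      have h2 : (0:ℝ) ≤ ∑ i, if q i = r then ε else 0 :=
        Finset.sum_nonneg fun i _ => by split <;> simp [hε.le]
      linarith
    · intro x
      rw [marg1_eq, hΦ', map_sub, map_add, map_sum, map_sum]
      have hqs : (∑ i, wsum (fun p' => if p'.1 = x then (1:ℝ) else 0) (Finsupp.single (q i) ε))
          = ∑ i, wsum (fun p' => if p'.1 = x then (1:ℝ) else 0) (Finsupp.single (p i) ε) := by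
        have step : ∀ i : Fin m,
            wsum (fun p' => if p'.1 = x then (1:ℝ) else 0) (Finsupp.single (q i) ε)
              = (if (p (i + 1)).1 = x then (1:ℝ) else 0) * ε := by
          intro i; simp only [hq, wsum_single]
        have step' : ∀ i : Fin m,
            wsum (fun p' => if p'.1 = x then (1:ℝ) else 0) (Finsupp.single (p i) ε)
              = (if (p i).1 = x then (1:ℝ) else 0) * ε := by
          intro i; simp only [wsum_single]
        have hshift : ∑ i : Fin m, (if (p (i + 1)).1 = x then (1:ℝ) else 0) * ε
            = ∑ i : Fin m, (if (p i).1 = x then (1:ℝ) else 0) * ε :=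
          Equiv.sum_comp (Equiv.addRight (1 : Fin m))
            (fun j : Fin m => (if (p j).1 = x then (1:ℝ) else 0) * ε)
        rw [Finset.sum_congr rfl fun i _ => step i, hshift,
          Finset.sum_congr rfl fun i _ => step' i]
      rw [hqs, ← marg1_eq]
      have := hopt.1.2.1 x
      linarith [this]
    · intro y
      rw [marg2_eq, hΦ', map_sub, map_add, map_sum, map_sum]
      have hqs : (∑ i, wsum (fun p' => if p'.2 = y then (1:ℝ) else 0) (Finsupp.single (q i) ε))
          = ∑ i, wsum (fun p' => if p'.2 = y then (1:ℝ) else 0) (Finsupp.single (p i) ε) :=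
        Finset.sum_congr rfl fun i _ => by rw [wsum_single, wsum_single]
      rw [hqs, ← marg2_eq]
      have := hopt.1.2.2 y
      linarith [this]
  have hcost := hopt.2 Φ' hcoup
  rw [gcost_eq, gcost_eq, hΦ', map_sub, map_add, map_sum, map_sum] at hcost
  have hQ : (∑ i, wsum (fun p' => (G.dist p'.1 p'.2 : ℝ)) (Finsupp.single (q i) ε))
      = (∑ i : Fin m, (G.dist (p (i + 1)).1 (p i).2 : ℝ)) * ε := by
    rw [Finset.sum_mul]
    exact Finset.sum_congr rfl fun i _ => by rw [wsum_single]
  have hP : (∑ i, wsum (fun p' => (G.dist p'.1 p'.2 : ℝ)) (Finsupp.single (p i) ε))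
      = (∑ i : Fin m, (G.dist (p i).1 (p i).2 : ℝ)) * ε := by
    rw [Finset.sum_mul]
    exact Finset.sum_congr rfl fun i _ => by rw [wsum_single]
  rw [hQ, hP] at hcost
  have : (∑ i : Fin m, (G.dist (p i).1 (p i).2 : ℝ)) * ε ≤
      (∑ i : Fin m, (G.dist (p (i + 1)).1 (p i).2 : ℝ)) * ε := by linarith
  exact le_of_mul_le_mul_right this hε

theorem oriented_path_is_geodesic
    (G : SimpleGraph V) (hconn : G.Connected) [G.LocallyFinite]
    (f₀ f₁ : V →₀ ℝ) (h₀ : IsProb f₀) (h₁ : IsProb f₁)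
    (γ : ℕ → V) (n : ℕ)
    (hpath : ∀ i < n, OrientedEdge G f₀ f₁ (γ i) (γ (i + 1))) :
    G.dist (γ 0) (γ n) = n := by
  classical
  have hadj : ∀ i < n, G.Adj (γ i) (γ (i + 1)) := by
    intro i hi
    obtain ⟨σ, N, k, hgeo, hC, hk, hx, hy⟩ := hpath i hi
    have := hgeo.1 k (by omega)
    rwa [hx, hy] at this
  have hub : G.dist (γ 0) (γ n) ≤ n := chain_dist G hconn γ n hadj
  rcases Nat.eq_zero_or_pos n with h0 | hn
  · subst h0; simp
  haveI : NeZero n := ⟨hn.ne'⟩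
  have H : ∀ i : Fin n, ∃ (σ : ℕ → V) (N k : ℕ), IsGeodesic G σ N ∧
      (σ 0, σ N) ∈ commonSupport G f₀ f₁ ∧ k + 1 ≤ N ∧
      σ k = γ i.1 ∧ σ (k + 1) = γ (i.1 + 1) := fun i => hpath i.1 i.2
  choose σ N k hgeo hC hk hx hy using H
  set p : Fin n → V × V := fun i => (σ i 0, σ i (N i)) with hpdef
  have hCm : ∀ i : Fin n, ∃ π, IsOptimalCoupling G f₀ f₁ π ∧ 0 < π (p i) := fun i => hC i
  choose πs hπopt hπpos using hCm
  obtain ⟨Φ, hΦopt, hΦpos⟩ := exists_common_optimal G f₀ f₁ hn πs hπopt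
  have hpos : ∀ i, 0 < Φ (p i) := fun i => hΦpos i (p i) (hπpos i)
  have hcyc := cyclic_ineq G f₀ f₁ Φ hΦopt p hpos
  -- distances along the chosen geodesics
  set A : Fin n → ℝ := fun i => (G.dist (σ i 0) (γ i.1) : ℝ) with hA
  set B : Fin n → ℝ := fun i => (G.dist (γ (i.1 + 1)) (σ i (N i)) : ℝ) with hB
  have hPi : ∀ i : Fin n, (G.dist (p i).1 (p i).2 : ℝ) = A i + 1 + B i := by
    intro i
    have h1 := (geo_split G hconn (hgeo i) (j := k i) (Nat.le_of_succ_le (hk i))).1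
    have h2 := (geo_split G hconn (hgeo i) (j := k i + 1) (hk i)).2
    have h3 : G.dist (σ i 0) (σ i (N i)) = N i := (hgeo i).2
    have hAi : G.dist (σ i 0) (γ i.1) = k i := by rw [← hx i]; exact h1
    have hBi : G.dist (γ (i.1 + 1)) (σ i (N i)) = N i - (k i + 1) := by
      rw [← hy i]; exact h2
    simp only [hpdef, hA, hB]
    rw [hAi, hBi, h3]
    push_cast [Nat.cast_sub (hk i)]
    ring
  -- value of (i+1) in Fin n
  have hval : ∀ i : Fin n, ((i + 1 : Fin n)).1 = (i.1 + 1) % n := by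
    intro i
    rw [Fin.add_def]
    conv_rhs => rw [Nat.add_mod, Nat.mod_eq_of_lt i.isLt]
    simp [Fin.val_one']
  set iL : Fin n := ⟨n - 1, by omega⟩ with hiL
  set D : ℝ := (G.dist (γ 0) (γ n) : ℝ) with hD
  have hQi : ∀ i : Fin n, (G.dist (p (i + 1)).1 (p i).2 : ℝ) ≤
      A (i + 1) + B i + (if i = iL then D else 0) := by
    intro i
    rcases Nat.lt_or_ge (i.1 + 1) n with hlt | hge
    · have hne : i ≠ iL := by
        intro h
        have hv' : i.1 = n - 1 := by rw [h]
        omega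
      have hv : ((i + 1 : Fin n)).1 = i.1 + 1 := by
        rw [hval i, Nat.mod_eq_of_lt hlt]
      rw [if_neg hne, add_zero]
      simp only [hpdef, hA, hB]
      rw [hv]
      have t1 := hconn.dist_triangle (u := σ (i + 1) 0) (v := γ (i.1 + 1))
        (w := σ i (N i))
      exact_mod_cast t1
    · have hieq : i.1 = n - 1 := by omega
      have hiLeq : i = iL := Fin.ext (by rw [hiL]; exact hieq)
      have hv0 : (i + 1 : Fin n) = 0 := by
        apply Fin.ext
        rw [hval i]
        simp [hieq, Nat.sub_add_cancel hn]
      have hin : i.1 + 1 = n := by omega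
      rw [if_pos hiLeq, hv0]
      simp only [hpdef, hA, hB, hD, Fin.val_zero]
      rw [hin]
      have t1 := hconn.dist_triangle (u := σ (0 : Fin n) 0) (v := γ 0)
        (w := σ i (N i))
      have t2 := hconn.dist_triangle (u := γ 0) (v := γ n) (w := σ i (N i))
      have tt : G.dist (σ (0 : Fin n) 0) (σ i (N i)) ≤
          G.dist (σ (0 : Fin n) 0) (γ 0) + G.dist (γ n) (σ i (N i)) +
            G.dist (γ 0) (γ n) := by omega
      exact_mod_cast tt
  -- sum it all up
  have hsum1 : ∑ i : Fin n, (G.dist (p i).1 (p i).2 : ℝ)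
      = (∑ i, A i) + n + (∑ i, B i) := by
    rw [Finset.sum_congr rfl fun i _ => hPi i]
    rw [Finset.sum_add_distrib, Finset.sum_add_distrib]
    simp [Finset.card_univ]
  have hsum2 : ∑ i : Fin n, (G.dist (p (i + 1)).1 (p i).2 : ℝ)
      ≤ (∑ i, A i) + (∑ i, B i) + D := by
    calc ∑ i : Fin n, (G.dist (p (i + 1)).1 (p i).2 : ℝ)
        ≤ ∑ i : Fin n, (A (i + 1) + B i + (if i = iL then D else 0)) :=
          Finset.sum_le_sum fun i _ => hQi i
      _ = (∑ i : Fin n, A (i + 1)) + (∑ i, B i) + (∑ i : Fin n, if i = iL then D else 0) := by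
          rw [Finset.sum_add_distrib, Finset.sum_add_distrib]
      _ = (∑ i, A i) + (∑ i, B i) + D := by
          have hAs : ∑ i : Fin n, A (i + 1) = ∑ i, A i :=
            Equiv.sum_comp (Equiv.addRight (1 : Fin n)) A
          rw [hAs, Finset.sum_ite_eq' Finset.univ iL (fun _ => D),
            if_pos (Finset.mem_univ iL)]
  have hnD : (n : ℝ) ≤ D := by
    rw [hsum1] at hcyc
    linarith
  rw [hD] at hnD
  have : n ≤ G.dist (γ 0) (γ n) := by exact_mod_cast hnD
  omega
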